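/- Let p be a prime, d ≥ 1 and q = p^d, and let G be a primitive rank 3 permutation group on GF(q) with T ≤ G ≤ AΓL_1(q), where T is the group of translations of GF(q). Let m_1 and m_2 be the two nontrivial subdegrees of G, with m_1 < m_2. Then m_1 divides m_2 and the quotient m_2/m_1 divides d. -/

import Mathlib

open MulAction Function



/-- The rank of a permutation group `G ≤ Sym(Ω)`: the number of orbits of `G`
on `Ω × Ω` under the componentwise action (the number of 2-orbits). -/
noncomputable def permRank {Ω : Type*} (G : Subgroup (Equiv.Perm Ω)) : ℕ :=
  Nat.card (MulAction.orbitRel.Quotient G (Ω × Ω))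

/-- A permutation group `G ≤ Sym(Ω)` is primitive if it is transitive and
every block of `G` is trivial (a subsingleton or the whole domain), i.e. `G`
preserves no partition of `Ω` other than the partition into singletons and the
partition with a single part. -/
def IsPrimitivePerm {Ω : Type*} (G : Subgroup (Equiv.Perm Ω)) : Prop :=
  MulAction.IsPretransitive G Ω ∧
    ∀ B : Set Ω, MulAction.IsBlock G B → B.Subsingleton ∨ B = Set.univ

/-- The one-dimensional affine semilinear group `AΓL₁(F)`, as the set of all
permutations of the field `F` of the form `x ↦ a • α x + b` with `a ∈ Fˣ`,
`b ∈ F` and `α` a field automorphism of `F`. -/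
def AGammaL1 (F : Type*) [Field F] : Set (Equiv.Perm F) :=
  {f | ∃ (a : Fˣ) (b : F) (α : F ≃+* F), ∀ x, f x = (a : F) * α x + b}

/-- The set of translations `x ↦ x + b` of the field `F`. -/
def translationsSet (F : Type*) [Field F] : Set (Equiv.Perm F) :=
  {f | ∃ b : F, ∀ x, f x = x + b}

/-- The set of nontrivial subdegrees of a transitive group `G ≤ Sym(F)` relative
to the point `0`: the cardinalities of the orbits of the stabilizer of `0` in `G`
on the nonzero points. -/
noncomputable def subdegreeSet (F : Type*) [Field F] (G : Subgroup (Equiv.Perm F)) :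
    Set ℕ :=
  {n | ∃ x : F, x ≠ 0 ∧ n = Nat.card (MulAction.orbit (MulAction.stabilizer G (0 : F)) x)}

section AuxDefs

variable {F : Type*} [Field F]

private def IsAffMap (g : Equiv.Perm F) (a : Fˣ) (α : F ≃+* F) : Prop :=
  ∀ x, g x = (a : F) * α x

private def uMap (α : F ≃+* F) : Fˣ →* Fˣ := Units.map α.toRingHom.toMonoidHom

@[simp] private lemma uMap_val (α : F ≃+* F) (a : Fˣ) : ((uMap α a : Fˣ) : F) = α a := rfl

private lemma isAffMap_unique {g : Equiv.Perm F} {a a' : Fˣ} {α α' : F ≃+* F}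
    (h : IsAffMap g a α) (h' : IsAffMap g a' α') : a = a' ∧ α = α' := by
  have h1 : (a : F) = a' := by
    have := (h 1).symm.trans (h' 1)
    simpa using this
  refine ⟨Units.ext h1, ?_⟩
  ext x
  have := (h x).symm.trans (h' x)
  rw [h1] at this
  exact mul_left_cancel₀ (Units.ne_zero a') this

private lemma isAffMap_mul {g g' : Equiv.Perm F} {a a' : Fˣ} {α α' : F ≃+* F}
    (h : IsAffMap g a α) (h' : IsAffMap g' a' α') :
    IsAffMap (g * g') (a * uMap α a') (α'.trans α) := by
  intro x
  rw [Equiv.Perm.mul_apply, h' x, h]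
  push_cast [uMap_val]
  rw [map_mul]
  ring_nf
  rfl

private lemma card_fiber_dvd {Q : Type*} [CommGroup Q] [Finite Q] (ψ : Q →* Q) (c : Q)
    (hne : (ψ ⁻¹' {c} : Set Q).Nonempty) :
    Nat.card (ψ ⁻¹' {c} : Set Q) ∣ Nat.card Q := by
  obtain ⟨q₀, hq₀⟩ := hne
  have hq₀' : ψ q₀ = c := hq₀
  have e : (ψ ⁻¹' {c} : Set Q) ≃ ψ.ker := by
    refine ⟨fun x => ⟨q₀⁻¹ * x, ?_⟩, fun y => ⟨q₀ * y, ?_⟩, ?_, ?_⟩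
    · have hx : ψ (x : Q) = c := x.2
      simp [MonoidHom.mem_ker, map_mul, hx, hq₀']
    · have hy : ψ (y : Q) = 1 := y.2
      simp [Set.mem_preimage, map_mul, hy, hq₀']
    · intro x; ext; simp
    · intro y; ext; simp
  rw [Nat.card_congr e]
  exact Subgroup.card_subgroup_dvd_card _

private lemma card_fix_affine_dvd {Q : Type*} [CommGroup Q] [Finite Q] (φ : Q →* Q) (c : Q)
    (hne : ({q : Q | φ q * c = q} : Set Q).Nonempty) :
    Nat.card ({q : Q | φ q * c = q} : Set Q) ∣ Nat.card Q := by
  have hset : ({q : Q | φ q * c = q} : Set Q) = ((MonoidHom.id Q) * φ⁻¹ : Q →* Q) ⁻¹' {c} := by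
    ext q
    simp only [Set.mem_setOf_eq, Set.mem_preimage, Set.mem_singleton_iff, MonoidHom.mul_apply,
      MonoidHom.inv_apply, MonoidHom.id_apply]
    rw [mul_inv_eq_iff_eq_mul]
    constructor
    · intro h
      rw [mul_comm] at h
      exact h.symm
    · intro h
      exact (mul_comm (φ q) c).trans h.symm
  rw [hset] at hne ⊢
  exact card_fiber_dvd _ _ hne

end AuxDefs

private lemma ringAut_facts {F : Type*} [Field F] [Fintype F] {p d : ℕ}
    (hp : p.Prime) (hd : 1 ≤ d) (hcard : Fintype.card F = p ^ d) :
    IsCyclic (F ≃+* F) ∧ Finite (F ≃+* F) ∧ (∀ α : F ≃+* F, α ^ d = 1) := by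
  haveI : Fact p.Prime := ⟨hp⟩
  obtain ⟨p', hp'⟩ := CharP.exists F
  haveI := hp'
  obtain ⟨n, hpn, hFn⟩ := FiniteField.card F p'
  have hpp' : p = p' := by
    have hdvd : p ∣ p' ^ (n : ℕ) := by
      rw [← hFn, hcard]
      exact dvd_pow_self p (by omega)
    exact ((Nat.prime_dvd_prime_iff_eq hp hpn).mp (hp.dvd_of_dvd_pow hdvd))
  subst hpp'
  letI : Algebra (ZMod p) F := ZMod.algebra _ _
  haveI : FiniteDimensional (ZMod p) F := Module.Finite.of_finite
  have ealg : (F ≃ₐ[ZMod p] F) ≃ (F ≃+* F) := by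
    refine ⟨fun f => f.toRingEquiv, fun f => AlgEquiv.ofRingEquiv (f := f) ?_, ?_, ?_⟩
    · intro x
      exact RingHom.congr_fun (RingHom.ext_zmod (f.toRingHom.comp (algebraMap (ZMod p) F))
        (algebraMap (ZMod p) F)) x
    · intro f; ext x; rfl
    · intro f; ext x; rfl
  haveI hfin : Finite (F ≃+* F) := Finite.of_equiv _ ealg
  have hfinrank : Module.finrank (ZMod p) F = d := by
    have h1 : Fintype.card F = Fintype.card (ZMod p) ^ Module.finrank (ZMod p) F :=
      Module.card_eq_pow_finrank
    rw [ZMod.card, hcard] at h1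
    exact (Nat.pow_right_injective hp.two_le h1.symm)
  have hNat : Nat.card (F ≃+* F) = d := by
    rw [← Nat.card_congr ealg, IsGalois.card_aut_eq_finrank, hfinrank]
  haveI : ExpChar F p := ExpChar.prime hp
  set φf := frobeniusEquiv F p with hφf
  have hiter : ∀ (n : ℕ) (x : F), (φf ^ n : F ≃+* F) x = x ^ p ^ n := by
    intro n
    induction n with
    | zero => intro x; rw [pow_zero, pow_zero, pow_one]; rfl
    | succ n ih =>
      intro x
      rw [pow_succ, pow_succ]
      have : ((φf ^ n * φf : F ≃+* F)) x = (φf ^ n : F ≃+* F) (φf x) := rfl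
      rw [this, ih, frobeniusEquiv_def, ← pow_mul]
      congr 1
      ring
  have hofd : orderOf φf = d := by
    have hdvd : orderOf φf ∣ d := hNat ▸ orderOf_dvd_natCard φf
    have hpos : 0 < orderOf φf := orderOf_pos φf
    have hle : d ≤ orderOf φf := by
      set o := orderOf φf with ho
      obtain ⟨g, hg⟩ := IsCyclic.exists_generator (α := Fˣ)
      have hog : orderOf g = p ^ d - 1 := by
        rw [orderOf_eq_card_of_forall_mem_zpowers hg, Nat.card_units, Nat.card_eq_fintype_card,
          hcard]
      have hfix : (g : F) ^ p ^ o = (g : F) := by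
        have := hiter o (g : F)
        rw [pow_orderOf_eq_one φf] at this
        simpa using this.symm
      have hgpow : g ^ (p ^ o - 1) = 1 := by
        have h1 : g ^ p ^ o = g := by
          ext
          push_cast
          exact hfix
        have hpo : 1 ≤ p ^ o := Nat.one_le_pow _ _ hp.pos
        have : g ^ (p ^ o - 1) * g = g := by
          rw [← pow_succ, Nat.sub_add_cancel hpo, h1]
        exact mul_right_cancel (this.trans (one_mul g).symm)
      have hdvd2 : p ^ d - 1 ∣ p ^ o - 1 := hog ▸ orderOf_dvd_of_pow_eq_one hgpow
      have hpo1 : 0 < p ^ o - 1 := by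
        have : 2 ≤ p ^ o := le_trans hp.two_le (Nat.le_self_pow (by omega) p)
        omega
      have hle1 : p ^ d - 1 ≤ p ^ o - 1 := Nat.le_of_dvd hpo1 hdvd2
      have : p ^ d ≤ p ^ o := by
        have h2 : 2 ≤ p ^ d := le_trans hp.two_le (Nat.le_self_pow (by omega) p)
        omega
      exact (Nat.pow_le_pow_iff_right hp.one_lt).mp this
    exact Nat.le_antisymm (Nat.le_of_dvd (by omega) hdvd) hle
  refine ⟨isCyclic_of_orderOf_eq_card φf (by rw [hofd, hNat]), hfin, ?_⟩
  intro α
  calc α ^ d = α ^ Nat.card (F ≃+* F) := by rw [hNat]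
  _ = 1 := pow_card_eq_one'

private lemma claimA {F : Type*} [Field F] [Fintype F]
    (G : Subgroup (Equiv.Perm F))
    (hT : translationsSet F ⊆ (G : Set (Equiv.Perm F)))
    (hrank : permRank G = 3)
    {m₁ m₂ : ℕ} (hne : m₁ ≠ m₂)
    {x₁ x₂ : F} (h₁ : x₁ ≠ 0) (h₂ : x₂ ≠ 0)
    (hc₁ : m₁ = Nat.card (MulAction.orbit (MulAction.stabilizer G (0:F)) x₁))
    (hc₂ : m₂ = Nat.card (MulAction.orbit (MulAction.stabilizer G (0:F)) x₂)) :
    ∀ x : F, x ≠ 0 → MulAction.orbit (MulAction.stabilizer G (0:F)) x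
      = MulAction.orbit (MulAction.stabilizer G (0:F)) x₁ ∨
      MulAction.orbit (MulAction.stabilizer G (0:F)) x
      = MulAction.orbit (MulAction.stabilizer G (0:F)) x₂ := by
  classical
  set S := MulAction.stabilizer G (0:F) with hSdef
  have hsmulS : ∀ (g : ↥S) (x : F), g • x = ((g : G) : Equiv.Perm F) x := fun _ _ => rfl
  have hsmulG : ∀ (g : G) (x : F), g • x = (g : Equiv.Perm F) x := fun _ _ => rfl
  have hfix0 : ∀ g : ↥S, ((g : G) : Equiv.Perm F) 0 = 0 := fun g =>
    MulAction.mem_stabilizer_iff.mp g.2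
  have htrans : ∀ u : F, ∃ g : G, (g : Equiv.Perm F) u = 0 := by
    intro u
    exact ⟨⟨Equiv.addRight (-u), hT ⟨-u, fun x => by simp⟩⟩, by simp⟩
  -- the bijection between orbits of S on F and 2-orbits of G
  let f : MulAction.orbitRel.Quotient ↥S F → MulAction.orbitRel.Quotient G (F × F) :=
    Quotient.map' (fun x => ((0:F), x)) (by
      intro x y hxy
      rw [MulAction.orbitRel_apply] at hxy
      obtain ⟨g, hg⟩ := hxy
      have hg' : g • y = x := hg
      show MulAction.orbitRel G (F × F) ((0:F), x) ((0:F), y)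
      rw [MulAction.orbitRel_apply]
      refine ⟨(g : G), ?_⟩
      show ((g : G) • (0:F), (g : G) • y) = ((0:F), x)
      rw [hsmulG, hsmulG, hfix0 g]
      exact Prod.ext rfl hg'
      )
  have hinj : Function.Injective f := by
    intro a b
    induction a using Quotient.inductionOn' with | h x =>
    induction b using Quotient.inductionOn' with | h y =>
    intro hxy
    have hxy' : ((0:F), x) ∈ MulAction.orbit G ((0:F), y) := by
      rw [← MulAction.orbitRel_apply, ← Quotient.eq'']
      exact hxy
    obtain ⟨g, hg⟩ := hxy'
    have hg2 : (g • (0:F), g • y) = ((0:F), x) := hg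
    have hg0 : g • (0:F) = 0 := congrArg Prod.fst hg2
    have hgy : g • y = x := congrArg Prod.snd hg2
    rw [Quotient.eq'', MulAction.orbitRel_apply]
    exact ⟨⟨g, MulAction.mem_stabilizer_iff.mpr hg0⟩, hgy⟩
  have hsurj : Function.Surjective f := by
    intro b
    induction b using Quotient.inductionOn' with | h uv =>
    obtain ⟨u, v⟩ := uv
    obtain ⟨g, hg⟩ := htrans u
    refine ⟨Quotient.mk'' (g • v), ?_⟩
    show Quotient.mk'' ((0:F), g • v) = Quotient.mk'' (u, v)
    rw [Quotient.eq'', MulAction.orbitRel_apply]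
    refine ⟨g, ?_⟩
    show (g • u, g • v) = ((0:F), g • v)
    rw [hsmulG g u, hg]
  have hcard3 : Nat.card (MulAction.orbitRel.Quotient ↥S F) = 3 := by
    rw [Nat.card_eq_of_bijective f ⟨hinj, hsurj⟩]
    exact hrank
  -- orbit of 0 is {0}
  have horb0 : MulAction.orbit ↥S (0:F) = {0} := by
    ext y
    constructor
    · rintro ⟨g, rfl⟩
      show ((g : G) : Equiv.Perm F) 0 ∈ ({0} : Set F)
      rw [hfix0]
      rfl
    · rintro rfl
      exact MulAction.mem_orbit_self 0
  intro x hx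
  by_contra hcon
  push_neg at hcon
  obtain ⟨hcon1, hcon2⟩ := hcon
  have keyne : ∀ (u v : F), MulAction.orbit ↥S u ≠ MulAction.orbit ↥S v →
      (Quotient.mk'' u : MulAction.orbitRel.Quotient ↥S F) ≠ Quotient.mk'' v := by
    intro u v huv heq
    rw [Quotient.eq'', MulAction.orbitRel_apply] at heq
    exact huv (MulAction.orbit_eq_iff.mpr heq)
  have hne0 : ∀ (u : F), u ≠ 0 → MulAction.orbit ↥S u ≠ MulAction.orbit ↥S (0:F) := by
    intro u hu heq
    have hmem : u ∈ MulAction.orbit ↥S u := MulAction.mem_orbit_self u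
    rw [heq, horb0] at hmem
    exact hu hmem
  have hne12 : MulAction.orbit ↥S x₁ ≠ MulAction.orbit ↥S x₂ := by
    intro heq
    exact hne (by rw [hc₁, hc₂, heq])
  have n01 : (Quotient.mk'' (0:F) : MulAction.orbitRel.Quotient ↥S F) ≠ Quotient.mk'' x₁ :=
    (keyne x₁ 0 (hne0 x₁ h₁)).symm
  have n02 : (Quotient.mk'' (0:F) : MulAction.orbitRel.Quotient ↥S F) ≠ Quotient.mk'' x₂ :=
    (keyne x₂ 0 (hne0 x₂ h₂)).symm
  have n03 : (Quotient.mk'' (0:F) : MulAction.orbitRel.Quotient ↥S F) ≠ Quotient.mk'' x :=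
    (keyne x 0 (hne0 x hx)).symm
  have n12 : (Quotient.mk'' x₁ : MulAction.orbitRel.Quotient ↥S F) ≠ Quotient.mk'' x₂ :=
    keyne x₁ x₂ hne12
  have n13 : (Quotient.mk'' x₁ : MulAction.orbitRel.Quotient ↥S F) ≠ Quotient.mk'' x :=
    (keyne x x₁ hcon1).symm
  have n23 : (Quotient.mk'' x₂ : MulAction.orbitRel.Quotient ↥S F) ≠ Quotient.mk'' x :=
    (keyne x x₂ hcon2).symm
  haveI : Fintype (MulAction.orbitRel.Quotient ↥S F) := Fintype.ofFinite _
  have hcard4 : (insert (Quotient.mk'' (0:F)) (insert (Quotient.mk'' x₁)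
      (insert (Quotient.mk'' x₂) ({Quotient.mk'' x} :
        Finset (MulAction.orbitRel.Quotient ↥S F))))).card = 4 := by
    rw [Finset.card_insert_of_notMem (by simp [n01, n02, n03]),
      Finset.card_insert_of_notMem (by simp [n12, n13]),
      Finset.card_insert_of_notMem (by simp [n23]),
      Finset.card_singleton]
  have hle : (4:ℕ) ≤ 3 := by
    calc (4:ℕ) = _ := hcard4.symm
    _ ≤ Fintype.card (MulAction.orbitRel.Quotient ↥S F) := Finset.card_le_univ _
    _ = Nat.card (MulAction.orbitRel.Quotient ↥S F) := (Nat.card_eq_fintype_card).symm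
    _ = 3 := hcard3
  omega

/-- For a primitive rank 3 group `T ≤ G ≤ AΓL₁(p^d)` with
nontrivial subdegrees `m₁ < m₂`, one has `m₁ ∣ m₂` and `(m₂ / m₁) ∣ d`. -/
theorem one_dimensional_subdegrees_divisibility {F : Type*} [Field F] [Fintype F]
    (p d : ℕ) (hp : p.Prime) (hd : 1 ≤ d) (hcard : Fintype.card F = p ^ d)
    (G : Subgroup (Equiv.Perm F))
    (hT : translationsSet F ⊆ (G : Set (Equiv.Perm F)))
    (hA : (G : Set (Equiv.Perm F)) ⊆ AGammaL1 F)
    (hprim : IsPrimitivePerm G) (hrank : permRank G = 3)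
    (m₁ m₂ : ℕ) (hlt : m₁ < m₂) (hsub : subdegreeSet F G = {m₁, m₂}) :
    m₁ ∣ m₂ ∧ (m₂ / m₁) ∣ d := by
  classical
  obtain ⟨hcyc, hfinAut, hpowd⟩ := ringAut_facts hp hd hcard
  haveI := hcyc
  haveI := hfinAut
  -- representatives of the two subdegrees
  have hm₁mem : m₁ ∈ subdegreeSet F G := by rw [hsub]; exact Set.mem_insert _ _
  have hm₂mem : m₂ ∈ subdegreeSet F G := by rw [hsub]; exact Set.mem_insert_of_mem _ rfl
  obtain ⟨x₁, hx₁, hc₁⟩ := hm₁mem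
  obtain ⟨x₂, hx₂, hc₂⟩ := hm₂mem
  have hcover := claimA G hT hrank hlt.ne hx₁ hx₂ hc₁ hc₂
  set S := MulAction.stabilizer G (0:F) with hSdef
  have hfix0 : ∀ g : ↥S, ((g : G) : Equiv.Perm F) 0 = 0 := fun g =>
    MulAction.mem_stabilizer_iff.mp g.2
  -- decomposition of elements of the stabilizer
  have hdec : ∀ g : ↥S, ∃ (a : Fˣ) (α : F ≃+* F), IsAffMap ((g : G) : Equiv.Perm F) a α := by
    intro g
    obtain ⟨a, b, α, hab⟩ := hA (g : G).2
    have h0 := hab 0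
    rw [hfix0 g, map_zero, mul_zero, zero_add] at h0
    exact ⟨a, α, fun x => by rw [hab x, ← h0, add_zero]⟩
  choose aP αP hP using hdec
  have hpermmul : ∀ g g' : ↥S, (((g * g' : ↥S) : G) : Equiv.Perm F)
      = ((g : G) : Equiv.Perm F) * ((g' : G) : Equiv.Perm F) := fun _ _ => rfl
  have hαmul : ∀ g g' : ↥S, αP (g * g') = αP g * αP g' := by
    intro g g'
    have h2 := isAffMap_mul (hP g) (hP g')
    rw [← hpermmul] at h2
    exact (isAffMap_unique (hP (g * g')) h2).2
  -- the subgroup H of scalars contained in G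
  set H : Subgroup Fˣ := Subgroup.comap (MulAction.toPermHom Fˣ F) G with hHdef
  have htoPerm_apply : ∀ (a : Fˣ) (x : F), (MulAction.toPermHom Fˣ F a) x = (a : F) * x := by
    intro a x
    simp [MulAction.toPermHom_apply, MulAction.toPerm_apply, Units.smul_def, smul_eq_mul]
  have hmemH : ∀ a : Fˣ, a ∈ H ↔ (MulAction.toPermHom Fˣ F a) ∈ G := fun a => Iff.rfl
  have hgH : ∀ a : Fˣ, a ∈ H → ∃ g : ↥S, ∀ x : F, ((g : G) : Equiv.Perm F) x = (a : F) * x := by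
    intro a ha
    refine ⟨⟨⟨MulAction.toPermHom Fˣ F a, ha⟩, ?_⟩, ?_⟩
    · rw [MulAction.mem_stabilizer_iff]
      show (MulAction.toPermHom Fˣ F a) 0 = 0
      rw [htoPerm_apply, mul_zero]
    · intro x
      exact htoPerm_apply a x
  -- the action of S on the units
  have hgne : ∀ (g : ↥S) (u : Fˣ), ((g : G) : Equiv.Perm F) (u : F) ≠ 0 := by
    intro g u h0
    have h1 : ((g : G) : Equiv.Perm F) (u : F) = ((g : G) : Equiv.Perm F) 0 := by
      rw [hfix0, h0]
    exact u.ne_zero ((Equiv.injective _) h1)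
  set act : ↥S → Fˣ → Fˣ := fun g u => Units.mk0 (((g : G) : Equiv.Perm F) (u : F)) (hgne g u)
    with hactdef
  have act_val : ∀ g u, ((act g u : Fˣ) : F) = ((g : G) : Equiv.Perm F) (u : F) := fun g u => rfl
  have act_mul : ∀ (g g' : ↥S) (u : Fˣ), act (g * g') u = act g (act g' u) := by
    intro g g' u
    ext
    rw [act_val, act_val, act_val, hpermmul]
    rfl
  have act_one : ∀ u, act 1 u = u := by
    intro u
    ext
    rw [act_val]
    rfl
  have act_spec : ∀ g u, act g u = aP g * uMap (αP g) u := by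
    intro g u
    ext
    rw [act_val, hP g]
    rw [Units.val_mul, uMap_val]
  -- H is invariant under the automorphisms appearing in S
  have hαH : ∀ (g : ↥S) (a : Fˣ), a ∈ H → uMap (αP g) a ∈ H := by
    intro g a ha
    have key : MulAction.toPermHom Fˣ F (uMap (αP g) a)
        = ((g : G) : Equiv.Perm F) * (MulAction.toPermHom Fˣ F a)
          * (((g : G) : Equiv.Perm F))⁻¹ := by
      ext x
      rw [Equiv.Perm.mul_apply, Equiv.Perm.mul_apply, htoPerm_apply, htoPerm_apply, uMap_val]
      have hx : ((g : G) : Equiv.Perm F) ((((g : G) : Equiv.Perm F))⁻¹ x) = x :=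
        Equiv.apply_symm_apply _ x
      calc (αP g) (a : F) * x
          = (αP g) (a : F) * (aP g * (αP g) ((((g : G) : Equiv.Perm F))⁻¹ x)) := by
            rw [← hP g, hx]
        _ = (aP g : F) * ((αP g) (a : F) * (αP g) ((((g : G) : Equiv.Perm F))⁻¹ x)) := by ring
        _ = (aP g : F) * (αP g) ((a : F) * (((g : G) : Equiv.Perm F))⁻¹ x) := by rw [map_mul]
        _ = ((g : G) : Equiv.Perm F) ((a : F) * (((g : G) : Equiv.Perm F))⁻¹ x) := (hP g _).symm
    rw [hmemH, key]
    exact mul_mem (mul_mem (g : G).2 ha) (inv_mem (g : G).2)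
  -- the induced action on the quotient Q = Fˣ ⧸ H
  haveI : Finite (Fˣ ⧸ H) := Quotient.finite _
  have hrespect : ∀ (g : ↥S) (u v : Fˣ), (QuotientGroup.leftRel H) u v →
      (QuotientGroup.leftRel H) (act g u) (act g v) := by
    intro g u v huv
    rw [QuotientGroup.leftRel_apply] at huv ⊢
    have hcalc : (act g u)⁻¹ * act g v = uMap (αP g) (u⁻¹ * v) := by
      rw [act_spec, act_spec, map_mul, map_inv]
      group
    rw [hcalc]
    exact hαH g _ huv
  have hli : ∀ (g : ↥S) (q : Fˣ ⧸ H),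
      Quotient.map' (act g⁻¹) (hrespect g⁻¹) (Quotient.map' (act g) (hrespect g) q) = q := by
    intro g q
    induction q using Quotient.inductionOn' with | h u =>
    show Quotient.mk'' (act g⁻¹ (act g u)) = Quotient.mk'' u
    rw [← act_mul, inv_mul_cancel, act_one]
  have hri : ∀ (g : ↥S) (q : Fˣ ⧸ H),
      Quotient.map' (act g) (hrespect g) (Quotient.map' (act g⁻¹) (hrespect g⁻¹) q) = q := by
    intro g q
    induction q using Quotient.inductionOn' with | h u =>
    show Quotient.mk'' (act g (act g⁻¹ u)) = Quotient.mk'' u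
    rw [← act_mul, mul_inv_cancel, act_one]
  set ρ : ↥S →* Equiv.Perm (Fˣ ⧸ H) := MonoidHom.mk'
    (fun g => ⟨Quotient.map' (act g) (hrespect g), Quotient.map' (act g⁻¹) (hrespect g⁻¹),
      hli g, hri g⟩)
    (by
      intro g g'
      ext q
      induction q using Quotient.inductionOn' with | h u =>
      show Quotient.mk'' (act (g * g') u) = Quotient.mk'' (act g (act g' u))
      rw [act_mul]) with hρdef
  have ρ_mk : ∀ (g : ↥S) (u : Fˣ), ρ g (QuotientGroup.mk u) = QuotientGroup.mk (act g u) :=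
    fun g u => rfl
  -- ρ g is an affine map of the quotient group
  have hrho_affine : ∀ g : ↥S, ∃ (φ : (Fˣ ⧸ H) →* (Fˣ ⧸ H)) (c : Fˣ ⧸ H),
      ∀ q, ρ g q = φ q * c := by
    intro g
    have hmap : H ≤ H.comap (uMap (αP g)) := fun a ha => hαH g a ha
    refine ⟨QuotientGroup.map H H (uMap (αP g)) hmap, QuotientGroup.mk (aP g), ?_⟩
    intro q
    induction q using Quotient.inductionOn' with | h u =>
    have h1 : ρ g (QuotientGroup.mk u) = QuotientGroup.mk (act g u) := ρ_mk g u
    rw [h1, QuotientGroup.map_mk]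
    rw [← QuotientGroup.mk_mul]
    congr 1
    rw [act_spec, mul_comm]
  -- scalar elements act trivially on the quotient
  have hker : ∀ g : ↥S, αP g = 1 → ρ g = 1 := by
    intro g hg1
    have haH : aP g ∈ H := by
      rw [hmemH]
      have heq : MulAction.toPermHom Fˣ F (aP g) = ((g : G) : Equiv.Perm F) := by
        ext x
        rw [htoPerm_apply, hP g, hg1]
        rfl
      rw [heq]
      exact (g : G).2
    ext q
    induction q using Quotient.inductionOn' with | h u =>
    show ρ g (QuotientGroup.mk u) = QuotientGroup.mk u
    rw [ρ_mk, QuotientGroup.eq]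
    have hval : act g u = u * aP g := by
      ext
      rw [act_val, hP g, hg1, Units.val_mul]
      show (aP g : F) * u = (u : F) * aP g
      ring
    rw [hval]
    have : (u * aP g)⁻¹ * u = (aP g)⁻¹ := by group
    rw [this]
    exact inv_mem haH
  -- the monoid hom to the automorphism group
  set Ψ : ↥S →* (F ≃+* F) := MonoidHom.mk' (fun g => αP g) hαmul with hΨdef
  -- ρ factors through a cyclic group, pick a generator
  have hkerle : Ψ.ker ≤ ρ.ker := by
    intro g hg
    rw [MonoidHom.mem_ker] at hg ⊢
    exact hker g hg
  have hΨrange_cyc : IsCyclic Ψ.range := Subgroup.isCyclic _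
  have hsurj1 : Function.Surjective (QuotientGroup.map Ψ.ker ρ.ker (MonoidHom.id ↥S) hkerle) := by
    intro x
    induction x using Quotient.inductionOn' with | h s =>
    exact ⟨QuotientGroup.mk s, rfl⟩
  have hcyc2 : IsCyclic (↥S ⧸ Ψ.ker) := by
    have := hΨrange_cyc
    exact isCyclic_of_surjective (QuotientGroup.quotientKerEquivRange Ψ).symm.toMonoidHom
      (QuotientGroup.quotientKerEquivRange Ψ).symm.surjective
  have hcyc3 : IsCyclic (↥S ⧸ ρ.ker) :=
    isCyclic_of_surjective _ hsurj1
  haveI : IsCyclic ρ.range := isCyclic_of_surjective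
    (QuotientGroup.quotientKerEquivRange ρ).toMonoidHom
    (QuotientGroup.quotientKerEquivRange ρ).surjective
  obtain ⟨σ₀, hσ₀⟩ := IsCyclic.exists_generator (α := ↥ρ.range)
  obtain ⟨s₀, hs₀⟩ := σ₀.2
  set σb : Equiv.Perm (Fˣ ⧸ H) := (σ₀ : Equiv.Perm (Fˣ ⧸ H)) with hσbdef
  have hs₀' : ρ s₀ = σb := hs₀
  -- every element of ρ S is an integer power of σb, and conversely
  have hpow : ∀ g : ↥S, ∃ j : ℤ, ρ g = σb ^ j := by
    intro g
    obtain ⟨j, hj⟩ := Subgroup.mem_zpowers_iff.mp (hσ₀ ⟨ρ g, ⟨g, rfl⟩⟩)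
    refine ⟨j, ?_⟩
    have h2 : ((σ₀ ^ j : ↥ρ.range) : Equiv.Perm (Fˣ ⧸ H)) = ρ g := congrArg Subtype.val hj
    rw [← h2, SubgroupClass.coe_zpow]
  have hpow' : ∀ j : ℤ, ρ (s₀ ^ j) = σb ^ j := by
    intro j
    rw [map_zpow, hs₀']
  -- σb ^ d = 1
  have hσbd : σb ^ d = 1 := by
    rw [← hs₀', ← map_pow]
    have : Ψ (s₀ ^ d) = 1 := by
      rw [map_pow]
      exact hpowd (Ψ s₀)
    exact hker _ this
  -- units representatives
  set u₁ : Fˣ := Units.mk0 x₁ hx₁ with hu₁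
  set u₂ : Fˣ := Units.mk0 x₂ hx₂ with hu₂
  -- image of unit orbits
  have himg : ∀ u : Fˣ, Units.val '' {v : Fˣ | ∃ g : ↥S, act g u = v}
      = MulAction.orbit ↥S ((u : F)) := by
    intro u
    ext y
    constructor
    · rintro ⟨v, ⟨g, rfl⟩, rfl⟩
      exact ⟨g, rfl⟩
    · rintro ⟨g, rfl⟩
      exact ⟨act g u, ⟨g, rfl⟩, rfl⟩
  have hcardOrbU : ∀ u : Fˣ, Nat.card (MulAction.orbit ↥S ((u : F)) : Set F)
      = Nat.card ({v : Fˣ | ∃ g : ↥S, act g u = v} : Set Fˣ) := by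
    intro u
    rw [← himg u]
    exact (Nat.card_congr (Equiv.Set.image _ _ Units.val_injective)).symm
  -- preimage of an orbit on the quotient
  have hpre : ∀ u : Fˣ,
      (QuotientGroup.mk ⁻¹' (MulAction.orbit (Subgroup.zpowers σb)
        (QuotientGroup.mk u : Fˣ ⧸ H)) : Set Fˣ)
        = {v : Fˣ | ∃ g : ↥S, act g u = v} := by
    intro u
    ext v
    simp only [Set.mem_preimage, MulAction.mem_orbit_iff, Set.mem_setOf_eq]
    constructor
    · rintro ⟨⟨w, hw⟩, hwv⟩
      obtain ⟨j, rfl⟩ := Subgroup.mem_zpowers_iff.mp hw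
      have h1 : ρ (s₀ ^ j) (QuotientGroup.mk u) = QuotientGroup.mk v := by
        rw [hpow' j]
        exact hwv
      rw [ρ_mk, QuotientGroup.eq] at h1
      obtain ⟨gh, hgh⟩ := hgH _ h1
      refine ⟨gh * s₀ ^ j, ?_⟩
      rw [act_mul]
      have hw2 : ((act (s₀ ^ j) u)⁻¹ * v) * act (s₀ ^ j) u = v := by
        rw [mul_comm _ v, mul_assoc, inv_mul_cancel, mul_one]
      ext
      calc ((act gh (act (s₀ ^ j) u) : Fˣ) : F)
          = (((act (s₀ ^ j) u)⁻¹ * v : Fˣ) : F) * ((act (s₀ ^ j) u : Fˣ) : F) := by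
            rw [act_val, hgh]
        _ = ((v : Fˣ) : F) := by rw [← Units.val_mul, hw2]
    · rintro ⟨g, rfl⟩
      obtain ⟨j, hj⟩ := hpow g
      refine ⟨⟨σb ^ j, Subgroup.mem_zpowers_iff.mpr ⟨j, rfl⟩⟩, ?_⟩
      show (σb ^ j) (QuotientGroup.mk u) = QuotientGroup.mk (act g u)
      rw [← hj, ρ_mk]
  have hmemOrbU : ∀ (u v : Fˣ), (v : F) ∈ MulAction.orbit ↥S ((u : F)) →
      v ∈ {w : Fˣ | ∃ g : ↥S, act g u = w} := by
    intro u v hv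
    obtain ⟨g, hg⟩ := hv
    exact ⟨g, Units.ext (by rw [act_val]; exact hg)⟩
  -- the two orbits cover the quotient
  have hcoverQ : ∀ q : Fˣ ⧸ H,
      q ∈ MulAction.orbit (Subgroup.zpowers σb) (QuotientGroup.mk u₁)
      ∨ q ∈ MulAction.orbit (Subgroup.zpowers σb) (QuotientGroup.mk u₂) := by
    intro q
    obtain ⟨v, rfl⟩ := QuotientGroup.mk_surjective q
    rcases hcover (v : F) v.ne_zero with h | h
    · left
      have hv : v ∈ {w : Fˣ | ∃ g : ↥S, act g u₁ = w} := by
        apply hmemOrbU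
        show (v : F) ∈ MulAction.orbit ↥S x₁
        rw [← h]
        exact MulAction.mem_orbit_self _
      rw [← hpre u₁] at hv
      exact hv
    · right
      have hv : v ∈ {w : Fˣ | ∃ g : ↥S, act g u₂ = w} := by
        apply hmemOrbU
        show (v : F) ∈ MulAction.orbit ↥S x₂
        rw [← h]
        exact MulAction.mem_orbit_self _
      rw [← hpre u₂] at hv
      exact hv
  -- the two orbits are disjoint
  have hdisjQ : MulAction.orbit (Subgroup.zpowers σb) (QuotientGroup.mk u₁ : Fˣ ⧸ H)
      ∩ MulAction.orbit (Subgroup.zpowers σb) (QuotientGroup.mk u₂) = ∅ := by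
    by_contra hcontra
    obtain ⟨q, hq1, hq2⟩ := Set.nonempty_iff_ne_empty.mpr hcontra
    obtain ⟨v, rfl⟩ := QuotientGroup.mk_surjective q
    have hv1 : v ∈ {w : Fˣ | ∃ g : ↥S, act g u₁ = w} := by rw [← hpre u₁]; exact hq1
    have hv2 : v ∈ {w : Fˣ | ∃ g : ↥S, act g u₂ = w} := by rw [← hpre u₂]; exact hq2
    obtain ⟨g1, hg1⟩ := hv1
    obtain ⟨g2, hg2⟩ := hv2
    have hm1 : (v : F) ∈ MulAction.orbit ↥S x₁ := ⟨g1, by rw [← hg1]; rfl⟩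
    have hm2 : (v : F) ∈ MulAction.orbit ↥S x₂ := ⟨g2, by rw [← hg2]; rfl⟩
    have horb12 : MulAction.orbit ↥S x₁ = MulAction.orbit ↥S x₂ :=
      (MulAction.orbit_eq_iff.mpr hm1).symm.trans (MulAction.orbit_eq_iff.mpr hm2)
    exact hlt.ne (by rw [hc₁, hc₂, horb12])
  -- counting
  set k₁ := Nat.card (MulAction.orbit (Subgroup.zpowers σb)
    (QuotientGroup.mk u₁ : Fˣ ⧸ H) : Set (Fˣ ⧸ H)) with hk₁def
  set k₂ := Nat.card (MulAction.orbit (Subgroup.zpowers σb)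
    (QuotientGroup.mk u₂ : Fˣ ⧸ H) : Set (Fˣ ⧸ H)) with hk₂def
  set cH := Nat.card ↥H with hcHdef
  have hmcount : ∀ (u : Fˣ), Nat.card (MulAction.orbit ↥S ((u : F)) : Set F)
      = cH * Nat.card (MulAction.orbit (Subgroup.zpowers σb)
        (QuotientGroup.mk u : Fˣ ⧸ H) : Set (Fˣ ⧸ H)) := by
    intro u
    rw [hcardOrbU u, ← hpre u,
      Nat.card_congr (QuotientGroup.preimageMkEquivSubgroupProdSet H _), Nat.card_prod]
  have hm₁ : m₁ = cH * k₁ := by rw [hc₁]; exact hmcount u₁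
  have hm₂ : m₂ = cH * k₂ := by rw [hc₂]; exact hmcount u₂
  have hk₁pos : 0 < k₁ := by
    rw [hk₁def]
    haveI : Nonempty ↥(MulAction.orbit (Subgroup.zpowers σb)
        (QuotientGroup.mk u₁ : Fˣ ⧸ H) : Set (Fˣ ⧸ H)) :=
      ⟨⟨_, MulAction.mem_orbit_self _⟩⟩
    exact Nat.card_pos
  have hcHpos : 0 < cH := Nat.card_pos
  have hk₁₂ : k₁ < k₂ := by
    have h := hlt
    rw [hm₁, hm₂] at h
    exact Nat.lt_of_mul_lt_mul_left h
  have hQcard : Nat.card (Fˣ ⧸ H) = k₁ + k₂ := by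
    have hunion : (MulAction.orbit (Subgroup.zpowers σb) (QuotientGroup.mk u₁ : Fˣ ⧸ H))
        ∪ (MulAction.orbit (Subgroup.zpowers σb) (QuotientGroup.mk u₂)) = Set.univ := by
      ext q
      simp only [Set.mem_union, Set.mem_univ, iff_true]
      exact hcoverQ q
    calc Nat.card (Fˣ ⧸ H) = Nat.card ↥(Set.univ : Set (Fˣ ⧸ H)) :=
          (Nat.card_congr (Equiv.Set.univ _)).symm
    _ = (Set.univ : Set (Fˣ ⧸ H)).ncard := Nat.card_coe_set_eq _
    _ = k₁ + k₂ := by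
        rw [← hunion, Set.ncard_union_eq (Set.disjoint_iff_inter_eq_empty.mpr hdisjQ)
          (Set.toFinite _) (Set.toFinite _), hk₁def, hk₂def,
          Nat.card_coe_set_eq, Nat.card_coe_set_eq]
  -- minimal periods
  have hiterpt : ∀ (n : ℕ) (q : Fˣ ⧸ H), (σb • ·)^[n] q = σb ^ n • q := by
    intro n q
    rw [smul_iterate]
  have hperiod : ∀ u : Fˣ, Function.minimalPeriod (σb • ·) (QuotientGroup.mk u : Fˣ ⧸ H)
      = Nat.card (MulAction.orbit (Subgroup.zpowers σb)
          (QuotientGroup.mk u : Fˣ ⧸ H) : Set (Fˣ ⧸ H)) := by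
    intro u
    haveI : Fintype ↥(MulAction.orbit (Subgroup.zpowers σb)
        (QuotientGroup.mk u : Fˣ ⧸ H) : Set (Fˣ ⧸ H)) := Fintype.ofFinite _
    rw [MulAction.minimalPeriod_eq_card, Nat.card_eq_fintype_card]
  have hfix2 : σb ^ k₂ • (QuotientGroup.mk u₂ : Fˣ ⧸ H) = QuotientGroup.mk u₂ := by
    have h := Function.isPeriodicPt_minimalPeriod (σb • ·) (QuotientGroup.mk u₂ : Fˣ ⧸ H)
    rw [hperiod u₂, ← hk₂def] at h
    have h2 : (σb • ·)^[k₂] (QuotientGroup.mk u₂ : Fˣ ⧸ H) = QuotientGroup.mk u₂ := h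
    rw [hiterpt] at h2
    exact h2
  -- invariance of the fixed set
  have hinv : ∀ (j : ℤ) (q : Fˣ ⧸ H), σb ^ k₂ • q = q →
      σb ^ k₂ • (σb ^ j • q) = σb ^ j • q := by
    intro j q hq
    have hcomm : (σb ^ k₂) * σb ^ j = σb ^ j * σb ^ k₂ := by
      rw [← zpow_natCast σb k₂, ← zpow_add, ← zpow_add, add_comm]
    rw [smul_smul, hcomm, ← smul_smul, hq]
  have hP2fix : ∀ q ∈ MulAction.orbit (Subgroup.zpowers σb)
      (QuotientGroup.mk u₂ : Fˣ ⧸ H), σb ^ k₂ • q = q := by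
    rintro q ⟨⟨w, hw⟩, rfl⟩
    obtain ⟨j, rfl⟩ := Subgroup.mem_zpowers_iff.mp hw
    show σb ^ k₂ • (σb ^ j • (QuotientGroup.mk u₂ : Fˣ ⧸ H))
      = σb ^ j • (QuotientGroup.mk u₂ : Fˣ ⧸ H)
    exact hinv j _ hfix2
  have hσk : ρ (s₀ ^ k₂) = σb ^ k₂ := by rw [map_pow, hs₀']
  -- the key divisibility
  have hkey : k₁ ∣ k₂ := by
    by_cases hq1fix : σb ^ k₂ • (QuotientGroup.mk u₁ : Fˣ ⧸ H) = QuotientGroup.mk u₁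
    · have hper1 : Function.IsPeriodicPt (σb • ·) k₂ (QuotientGroup.mk u₁ : Fˣ ⧸ H) := by
        show (σb • ·)^[k₂] (QuotientGroup.mk u₁ : Fˣ ⧸ H) = QuotientGroup.mk u₁
        rw [hiterpt]
        exact hq1fix
      have h := Function.IsPeriodicPt.minimalPeriod_dvd hper1
      rw [hperiod u₁, ← hk₁def] at h
      exact h
    · exfalso
      have hfixsub : {q : Fˣ ⧸ H | σb ^ k₂ • q = q}
          = MulAction.orbit (Subgroup.zpowers σb) (QuotientGroup.mk u₂) := by
        apply Set.eq_of_subset_of_subset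
        · intro q hq
          rcases hcoverQ q with h | h
          · exfalso
            obtain ⟨⟨w, hw⟩, rfl⟩ := h
            obtain ⟨j, rfl⟩ := Subgroup.mem_zpowers_iff.mp hw
            have hq' : σb ^ k₂ • (σb ^ j • (QuotientGroup.mk u₁ : Fˣ ⧸ H))
                = σb ^ j • (QuotientGroup.mk u₁ : Fˣ ⧸ H) := hq
            have h2 := hinv (-j) _ hq'
            have hcancel : σb ^ (-j) • (σb ^ j • (QuotientGroup.mk u₁ : Fˣ ⧸ H))
                = QuotientGroup.mk u₁ := by
              rw [smul_smul, ← zpow_add, neg_add_cancel, zpow_zero, one_smul]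
            rw [hcancel] at h2
            exact hq1fix h2
          · exact h
        · exact hP2fix
      obtain ⟨φ, c, hφc⟩ := hrho_affine (s₀ ^ k₂)
      have hseteq : {q : Fˣ ⧸ H | σb ^ k₂ • q = q} = {q : Fˣ ⧸ H | φ q * c = q} := by
        ext q
        have hw : σb ^ k₂ • q = φ q * c := by
          show (σb ^ k₂) q = φ q * c
          rw [← hσk, hφc]
        simp only [Set.mem_setOf_eq, hw]
      have hne2 : ({q : Fˣ ⧸ H | φ q * c = q} : Set (Fˣ ⧸ H)).Nonempty := by
        rw [← hseteq]
        exact ⟨QuotientGroup.mk u₂, hP2fix _ (MulAction.mem_orbit_self _)⟩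
      have hdvd := card_fix_affine_dvd φ c hne2
      rw [← hseteq, hfixsub, ← hk₂def, hQcard] at hdvd
      have hk21 : k₂ ∣ k₁ := (Nat.dvd_add_right (dvd_refl k₂)).mp (by rwa [add_comm] at hdvd)
      exact absurd (Nat.le_of_dvd hk₁pos hk21) (not_le.mpr hk₁₂)
  -- k₂ divides d
  have hk₂d : k₂ ∣ d := by
    have hperd : Function.IsPeriodicPt (σb • ·) d (QuotientGroup.mk u₂ : Fˣ ⧸ H) := by
      show (σb • ·)^[d] (QuotientGroup.mk u₂ : Fˣ ⧸ H) = QuotientGroup.mk u₂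
      rw [hiterpt, hσbd, one_smul]
    have h := Function.IsPeriodicPt.minimalPeriod_dvd hperd
    rw [hperiod u₂, ← hk₂def] at h
    exact h
  -- conclusion
  obtain ⟨t, ht⟩ := hkey
  have hm₂t : m₂ = m₁ * t := by rw [hm₁, hm₂, ht, mul_assoc]
  refine ⟨⟨t, hm₂t⟩, ?_⟩
  have hm₁pos : 0 < m₁ := by rw [hm₁]; exact Nat.mul_pos hcHpos hk₁pos
  have hdivt : m₂ / m₁ = t := by rw [hm₂t, Nat.mul_div_cancel_left _ hm₁pos]
  rw [hdivt]
  exact dvd_trans ⟨k₁, by rw [ht, mul_comm]⟩ hk₂d
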